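/- Every paracompact Hausdorff star-K-Scheepers space has the Scheepers property. -/
import Mathlib


open Set

/-- Star of a set `A` with respect to a family `P`: `St(A,P) = ⋃{B ∈ P : A ∩ B ≠ ∅}`. -/
def st {X : Type*} (A : Set X) (P : Set (Set X)) : Set X :=
  ⋃₀ {B | B ∈ P ∧ (A ∩ B).Nonempty}

/-- `U` is an open cover of the space. -/
def IsOpenCover {X : Type*} [TopologicalSpace X] (U : Set (Set X)) : Prop :=
  (∀ V ∈ U, IsOpen V) ∧ ⋃₀ U = Set.univ

/-- An ω-cover: an open cover such that every finite subset lies in some member. -/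
def IsOmegaCover {X : Type*} [TopologicalSpace X] (U : Set (Set X)) : Prop :=
  IsOpenCover U ∧ ∀ F : Set X, F.Finite → ∃ V ∈ U, F ⊆ V

/-- The star-K-Scheepers property. -/
def StarKScheepers (X : Type*) [TopologicalSpace X] : Prop :=
  ∀ U : ℕ → Set (Set X), (∀ n, IsOpenCover (U n)) →
    ∃ K : ℕ → Set X, (∀ n, IsCompact (K n)) ∧
      IsOmegaCover {S | ∃ n, S = st (K n) (U n)}

/-- The Scheepers property. -/
def Scheepers (X : Type*) [TopologicalSpace X] : Prop :=
  ∀ U : ℕ → Set (Set X), (∀ n, IsOpenCover (U n)) →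
    ∃ V : ℕ → Set (Set X), (∀ n, (V n).Finite ∧ V n ⊆ U n) ∧
      (IsOmegaCover {S | ∃ n, S = ⋃₀ (V n)} ∨ ∃ n, ⋃₀ (V n) = Set.univ)

/-- Every paracompact Hausdorff star-K-Scheepers space is Scheepers. -/
theorem paracompact_starKScheepers_implies_scheepers {X : Type*} [TopologicalSpace X]
    [T2Space X] [ParacompactSpace X] (h : StarKScheepers X) : Scheepers X := by
  intro U hU
  have hcov : ∀ n, ⋃ i : U n, (i : Set X) = univ := by
    intro n
    rw [← sUnion_eq_iUnion]
    exact (hU n).2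
  have href : ∀ n, ∃ v : U n → Set X, (∀ i, IsOpen (v i)) ∧ (⋃ i, v i = univ) ∧
      LocallyFinite v ∧ ∀ i, v i ⊆ (i : Set X) := fun n =>
    precise_refinement (fun i : U n => (i : Set X)) (fun i => (hU n).1 i i.2) (hcov n)
  choose v hvo hvc hvlf hvsub using href
  set W : ℕ → Set (Set X) := fun n => range (v n) with hW
  have hWoc : ∀ n, IsOpenCover (W n) := by
    intro n
    constructor
    · rintro B ⟨i, rfl⟩; exact hvo n i
    · rw [sUnion_range]; exact hvc n
  obtain ⟨K, hKc, homega⟩ := h W hWoc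
  have hfin : ∀ n, {i : U n | (v n i ∩ K n).Nonempty}.Finite := fun n =>
    (hvlf n).finite_nonempty_inter_compact (hKc n)
  set V : ℕ → Set (Set X) := fun n =>
    (fun i : U n => (i : Set X)) '' {i | (v n i ∩ K n).Nonempty} with hV
  have hVfin : ∀ n, (V n).Finite := fun n => (hfin n).image _
  have hVsub : ∀ n, V n ⊆ U n := by
    rintro n B ⟨i, _, rfl⟩; exact i.2
  have hst : ∀ n, st (K n) (W n) ⊆ ⋃₀ V n := by
    rintro n x ⟨B, ⟨⟨i, rfl⟩, hne⟩, hx⟩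
    exact ⟨(i : Set X), ⟨i, by rwa [inter_comm] at hne, rfl⟩, hvsub n i hx⟩
  refine ⟨V, fun n => ⟨hVfin n, hVsub n⟩, Or.inl ?_⟩
  refine ⟨⟨?_, ?_⟩, ?_⟩
  · rintro S ⟨n, rfl⟩
    exact isOpen_sUnion fun B hB => (hU n).1 B (hVsub n hB)
  · apply eq_univ_of_univ_subset
    intro x _
    have := homega.1.2
    have hx : x ∈ ⋃₀ {S | ∃ n, S = st (K n) (W n)} := this ▸ mem_univ x
    obtain ⟨S, ⟨n, rfl⟩, hxS⟩ := hx
    exact ⟨⋃₀ V n, ⟨n, rfl⟩, hst n hxS⟩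
  · intro F hF
    obtain ⟨S, ⟨n, rfl⟩, hFS⟩ := homega.2 F hF
    exact ⟨⋃₀ V n, ⟨n, rfl⟩, hFS.trans (hst n)⟩
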